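/- For any $\lambda \in [0,\lambda^*(X))$ and $\delta = \delta(\lambda)$, the supremum defining $r_X(\delta)$ is attained at $\lambda$: $r_X(\delta(\lambda)) = \lambda(H(X)+\delta(\lambda)) - \ln \sum_x p(x)^{1-\lambda}$; i.e., for every $\beta \geq 0$ with $\beta \neq \lambda$, $\beta(H(X)+\delta(\lambda)) - \ln\sum_x p(x)^{1-\beta} \leq \lambda(H(X)+\delta(\lambda)) - \ln\sum_x p(x)^{1-\lambda}$. -/

import Mathlib

open scoped BigOperators

/-- The right rate function `r_X(δ)`. -/
noncomputable def rateR {α : Type*} (p : α → ℝ) (H δ : ℝ) : ℝ :=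
  sSup {y : ℝ | ∃ l : ℝ, 0 ≤ l ∧ Summable (fun x => p x * p x ^ (-l)) ∧
      y = l * (H + δ) - Real.log (∑' x, p x * p x ^ (-l))}

/-- The tilted mean shift `δ(λ)`. -/
noncomputable def dshift {α : Type*} (p : α → ℝ) (H l : ℝ) : ℝ :=
  (∑' x, (p x * p x ^ (-l)) * (-Real.log (p x))) / (∑' y, p y * p y ^ (-l)) - H

theorem stmt4 {α : Type} [Countable α] (p : α → ℝ)
    (hp0 : ∀ x, 0 ≤ p x) (hp1 : HasSum p 1)
    (H S2 : ℝ)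
    (hH : HasSum (fun x => p x * (-Real.log (p x))) H)
    (hS2 : HasSum (fun x => p x * (Real.log (p x)) ^ 2) S2)
    (hvar : 0 < S2 - H ^ 2)
    (hM3 : Summable (fun x => p x * |Real.log (p x)| ^ 3))
    (lstar : ℝ) (hlstar : 0 < lstar)
    (hsum : ∀ l : ℝ, 0 ≤ l → l < lstar → Summable (fun x => p x * p x ^ (-l)))
    (l : ℝ) (hl0 : 0 ≤ l) (hll : l < lstar) :
    (∀ β : ℝ, 0 ≤ β → Summable (fun x => p x * p x ^ (-β)) →
        β * (H + dshift p H l) - Real.log (∑' x, p x * p x ^ (-β))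
          ≤ l * (H + dshift p H l) - Real.log (∑' x, p x * p x ^ (-l))) ∧
    rateR p H (dshift p H l)
      = l * (H + dshift p H l) - Real.log (∑' x, p x * p x ^ (-l)) := by
  have hple : ∀ x, p x ≤ 1 := fun x => le_hasSum hp1 x (fun y _ => hp0 y)
  have hw0 : ∀ x, 0 ≤ p x * p x ^ (-l) :=
    fun x => mul_nonneg (hp0 x) (Real.rpow_nonneg (hp0 x) _)
  have hwsum : Summable (fun x => p x * p x ^ (-l)) := hsum l hl0 hll
  set Z : ℝ := ∑' x, p x * p x ^ (-l) with hZdef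
  -- u x = w x * (-log p x)
  have hu0 : ∀ x, 0 ≤ (p x * p x ^ (-l)) * (-Real.log (p x)) := by
    intro x
    exact mul_nonneg (hw0 x) (neg_nonneg.2 (Real.log_nonpos (hp0 x) (hple x)))
  set ε : ℝ := (lstar - l) / 2 with hεdef
  have hεpos : 0 < ε := by simp only [hεdef]; linarith
  have husum : Summable (fun x => (p x * p x ^ (-l)) * (-Real.log (p x))) := by
    have hsum' : Summable (fun x => (1/ε) * (p x * p x ^ (-(l + ε)))) :=
      (hsum (l + ε) (by linarith) (by simp only [hεdef]; linarith)).mul_left _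
    refine Summable.of_nonneg_of_le hu0 (fun x => ?_) hsum'
    rcases eq_or_lt_of_le (hp0 x) with h0 | hpos
    · simp [← h0, hεpos.ne']
    · have hlog : -Real.log (p x) ≤ (1/ε) * (p x) ^ (-ε) := by
        have h1 : Real.log ((p x) ^ (-ε)) ≤ (p x) ^ (-ε) - 1 :=
          Real.log_le_sub_one_of_pos (Real.rpow_pos_of_pos hpos _)
        rw [Real.log_rpow hpos] at h1
        have h2 : (0:ℝ) < (p x) ^ (-ε) := Real.rpow_pos_of_pos hpos _
        rw [div_mul_eq_mul_div, le_div_iff₀ hεpos]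
        nlinarith
      calc (p x * p x ^ (-l)) * (-Real.log (p x))
          ≤ (p x * p x ^ (-l)) * ((1/ε) * (p x) ^ (-ε)) := by
            exact mul_le_mul_of_nonneg_left hlog (hw0 x)
        _ = (1/ε) * (p x * p x ^ (-(l + ε))) := by
            rw [neg_add, Real.rpow_add hpos]; ring
  set L : ℝ := ∑' x, (p x * p x ^ (-l)) * (-Real.log (p x)) with hLdef
  -- Z > 0
  obtain ⟨x0, hx0⟩ : ∃ x, 0 < p x := by
    by_contra h
    push_neg at h
    have : ∀ x, p x = 0 := fun x => le_antisymm (h x) (hp0 x)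
    have := hp1.unique (show HasSum p 0 by simpa [funext this] using (hasSum_zero : HasSum (fun _ : α => (0:ℝ)) 0))
    norm_num at this
  have hZpos : 0 < Z := lt_of_lt_of_le
    (mul_pos hx0 (Real.rpow_pos_of_pos hx0 _))
    (Summable.le_tsum hwsum x0 (fun y _ => hw0 y))
  have hm : H + dshift p H l = L / Z := by
    simp only [dshift, hLdef, hZdef]; ring
  -- main inequality
  have key : ∀ β : ℝ, 0 ≤ β → Summable (fun x => p x * p x ^ (-β)) →
      β * (H + dshift p H l) - Real.log (∑' x, p x * p x ^ (-β))
        ≤ l * (H + dshift p H l) - Real.log (∑' x, p x * p x ^ (-l)) := by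
    intro β hβ0 hβsum
    set c : ℝ := (β - l) * (L / Z) with hcdef
    clear_value c
    set Zβ : ℝ := ∑' x, p x * p x ^ (-β) with hZβdef
    have hpoint : ∀ x,
        Real.exp c * (1 - c) * (p x * p x ^ (-l))
          + Real.exp c * (β - l) * ((p x * p x ^ (-l)) * (-Real.log (p x)))
        ≤ p x * p x ^ (-β) := by
      intro x
      rcases eq_or_lt_of_le (hp0 x) with h0 | hpos
      · simp [← h0]
      · set g : ℝ := (β - l) * (-Real.log (p x)) with hgdef
        have h1 : g - c + 1 ≤ Real.exp (g - c) := Real.add_one_le_exp _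
        have h2 : Real.exp c * (g - c + 1) ≤ Real.exp g := by
          calc Real.exp c * (g - c + 1) ≤ Real.exp c * Real.exp (g - c) :=
                mul_le_mul_of_nonneg_left h1 (Real.exp_pos c).le
            _ = Real.exp g := by rw [← Real.exp_add]; ring_nf
        have h3 : (p x * p x ^ (-l)) * Real.exp g = p x * p x ^ (-β) := by
          have : Real.exp g = (p x) ^ (l - β) := by
            rw [Real.rpow_def_of_pos hpos]
            congr 1
            simp only [hgdef]; ring
          rw [this, mul_assoc, ← Real.rpow_add hpos]
          ring_nf
        calc Real.exp c * (1 - c) * (p x * p x ^ (-l))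
              + Real.exp c * (β - l) * ((p x * p x ^ (-l)) * (-Real.log (p x)))
            = (p x * p x ^ (-l)) * (Real.exp c * (g - c + 1)) := by
              simp only [hgdef]; ring
          _ ≤ (p x * p x ^ (-l)) * Real.exp g :=
              mul_le_mul_of_nonneg_left h2 (hw0 x)
          _ = p x * p x ^ (-β) := h3
    have hsum1 : Summable (fun x => Real.exp c * (1 - c) * (p x * p x ^ (-l))) :=
      hwsum.mul_left _
    have hsum2 : Summable (fun x =>
        Real.exp c * (β - l) * ((p x * p x ^ (-l)) * (-Real.log (p x)))) :=
      husum.mul_left _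
    have htsum_le : Real.exp c * (1 - c) * Z + Real.exp c * (β - l) * L ≤ Zβ := by
      have := Summable.tsum_le_tsum hpoint (hsum1.add hsum2) hβsum
      rwa [Summable.tsum_add hsum1 hsum2, tsum_mul_left, tsum_mul_left, ← hZdef, ← hLdef] at this
    have hcZ : c * Z = (β - l) * L := by
      rw [hcdef]
      field_simp
    have heq : Real.exp c * (1 - c) * Z + Real.exp c * (β - l) * L = Real.exp c * Z := by
      linear_combination (-Real.exp c) * hcZ
    have hZβ_ge : Real.exp c * Z ≤ Zβ := by linarith
    have hlog : c + Real.log Z ≤ Real.log Zβ := by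
      have h1 : Real.log (Real.exp c * Z) ≤ Real.log Zβ :=
        Real.log_le_log (by positivity) hZβ_ge
      rwa [Real.log_mul (Real.exp_pos c).ne' hZpos.ne', Real.log_exp] at h1
    rw [hm]
    have : β * (L / Z) - l * (L / Z) = c := by rw [hcdef]; ring
    linarith [this]
  refine ⟨key, ?_⟩
  have hmem : l * (H + dshift p H l) - Real.log Z ∈
      {y : ℝ | ∃ l' : ℝ, 0 ≤ l' ∧ Summable (fun x => p x * p x ^ (-l')) ∧
        y = l' * (H + dshift p H l) - Real.log (∑' x, p x * p x ^ (-l'))} :=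
    ⟨l, hl0, hwsum, rfl⟩
  refine IsGreatest.csSup_eq ⟨hmem, ?_⟩
  rintro y ⟨β, hβ0, hβsum, rfl⟩
  exact key β hβ0 hβsum
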